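/- Let p ≥ 2 be an even integer, let ζ ∈ ℂ be a primitive p-th root of unity, let x ∈ ℂ with x ≠ 0, and let y ∈ ℂ. Then (−x)^{p/2} · ∏_{ℓ=0}^{p−1} ( y − ζ^{(−1)^ℓ·ℓ} · (−x)^{(−1)^ℓ} ) = ( (−x)^{p/2}·y^{p/2} + 1 ) · ( y^{p/2} − (−x)^{p/2} ), where for odd ℓ the factor is y − ζ^{−ℓ}·(−x)^{−1}. -/

import Mathlib

open Finset Polynomial

private lemma prod_range_two_mul' {M : Type*} [CommMonoid M] (m : ℕ) (f : ℕ → M) :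
    ∏ ℓ ∈ Finset.range (2 * m), f ℓ =
      (∏ k ∈ Finset.range m, f (2 * k)) * ∏ k ∈ Finset.range m, f (2 * k + 1) := by
  induction m with
  | zero => simp
  | succ n ih =>
      have : 2 * (n + 1) = (2 * n + 1) + 1 := by ring
      rw [this, Finset.prod_range_succ, Finset.prod_range_succ, Finset.prod_range_succ,
        Finset.prod_range_succ, ih]
      rw [mul_assoc]
      exact mul_mul_mul_comm _ _ _ _

private lemma prod_root_factors {m : ℕ} (hm : 0 < m) {ω : ℂ} (hω : IsPrimitiveRoot ω m)
    (c y : ℂ) : ∏ k ∈ Finset.range m, (y - c * ω ^ k) = y ^ m - c ^ m := by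
  have h := X_pow_sub_C_eq_prod (R := ℂ) hω hm (rfl : c ^ m = c ^ m)
  have := congrArg (Polynomial.eval y) h
  simpa [Polynomial.eval_prod, mul_comm] using this.symm

/-- Product identity for the `c = 1` limit of the LMO spectral curve of the `D_{p+2}`
geometry, `p` even: the product over the monodromy orbit of the sheet factors
`y - ζ^{(-1)^ℓ ℓ} (-x)^{(-1)^ℓ}` factorizes as stated. -/
theorem stmt_15 (p : ℕ) (hp : 2 ≤ p) (hpeven : Even p)
    (ζ : ℂ) (hζ : IsPrimitiveRoot ζ p) (x : ℂ) (hx : x ≠ 0) (y : ℂ) :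
    (-x) ^ (p / 2) *
      ∏ ℓ ∈ Finset.range p,
        (y - ζ ^ ((-1 : ℤ) ^ ℓ * ℓ) * (-x) ^ ((-1 : ℤ) ^ ℓ))
    = ((-x) ^ (p / 2) * y ^ (p / 2) + 1) * (y ^ (p / 2) - (-x) ^ (p / 2)) := by
  obtain ⟨m, hm⟩ := hpeven
  have hp2 : p = 2 * m := by omega
  have hm0 : 0 < m := by omega
  have hdiv : p / 2 = m := by omega
  have hζ0 : ζ ≠ 0 := hζ.ne_zero (by omega)
  have hX : (-x) ≠ 0 := neg_ne_zero.mpr hx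
  -- ζ ^ m = -1
  have hζm : ζ ^ m = -1 := by
    have hsq : (ζ ^ m) ^ 2 = 1 := by
      rw [← pow_mul, mul_comm, ← hp2]; exact hζ.pow_eq_one
    have hne : ζ ^ m ≠ 1 := hζ.pow_ne_one_of_pos_of_lt hm0.ne' (by omega)
    rcases sq_eq_one_iff.mp hsq with h | h
    · exact absurd h hne
    · exact h
  -- split the product into even and odd indices
  rw [hdiv, hp2, prod_range_two_mul']
  have heven : ∀ k, (y - ζ ^ ((-1 : ℤ) ^ (2 * k) * (2 * k : ℕ)) * (-x) ^ ((-1 : ℤ) ^ (2 * k)))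
      = y - (-x) * (ζ ^ 2) ^ k := by
    intro k
    have h1 : ((-1 : ℤ)) ^ (2 * k) = 1 := by
      rw [pow_mul]; norm_num
    rw [h1, one_mul, zpow_one, zpow_natCast, pow_mul]
    ring
  have hodd : ∀ k, (y - ζ ^ ((-1 : ℤ) ^ (2 * k + 1) * (2 * k + 1 : ℕ)) * (-x) ^ ((-1 : ℤ) ^ (2 * k + 1)))
      = y - (ζ⁻¹ * (-x)⁻¹) * ((ζ⁻¹) ^ 2) ^ k := by
    intro k
    have h1 : ((-1 : ℤ)) ^ (2 * k + 1) = -1 := by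
      rw [pow_succ, pow_mul]; norm_num
    rw [h1, neg_one_mul, zpow_neg, zpow_neg, zpow_one, zpow_natCast]
    rw [← inv_pow, pow_add, pow_mul, pow_one]
    ring
  have hω : IsPrimitiveRoot (ζ ^ 2) m := by
    refine IsPrimitiveRoot.pow (by omega) hζ ?_
    omega
  have hωinv : IsPrimitiveRoot ((ζ⁻¹) ^ 2) m := by
    simpa [inv_pow] using (hω.inv)
  have he : ∏ k ∈ Finset.range m,
      (y - ζ ^ ((-1 : ℤ) ^ (2 * k) * (2 * k : ℕ)) * (-x) ^ ((-1 : ℤ) ^ (2 * k)))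
      = y ^ m - (-x) ^ m := by
    rw [Finset.prod_congr rfl fun k _ => heven k]
    exact prod_root_factors hm0 hω _ y
  have ho : ∏ k ∈ Finset.range m,
      (y - ζ ^ ((-1 : ℤ) ^ (2 * k + 1) * (2 * k + 1 : ℕ)) * (-x) ^ ((-1 : ℤ) ^ (2 * k + 1)))
      = y ^ m + ((-x) ^ m)⁻¹ := by
    rw [Finset.prod_congr rfl fun k _ => hodd k, prod_root_factors hm0 hωinv _ y]
    have : (ζ⁻¹ * (-x)⁻¹) ^ m = -((-x) ^ m)⁻¹ := by
      rw [mul_pow, inv_pow, inv_pow, hζm]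
      norm_num
    rw [this]; ring
  rw [he, ho]
  have hXm : (-x) ^ m ≠ 0 := pow_ne_zero _ hX
  field_simp
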